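/- Let L, β₀, ϑ > 0, ε ≥ 0 and z ∈ ℝ^{m×n}. Suppose x⁺ ∈ ℝ^{m×n} satisfies (L/2)‖x⁺ − z‖²_F + (β₀/(2ϑ))‖Πx⁺‖²_F ≤ min_{x ∈ ℝ^{m×n}} [ (L/2)‖x − z‖²_F + (β₀/(2ϑ))‖Πx‖²_F ] + ε. Then there exists δ ∈ ℝ^{m×n} with ‖δ‖_F ≤ √(2ε/L) and (β₀/ϑ)‖Πδ‖²_F ≤ 2ε such that L(x⁺ − z + δ) + (β₀/ϑ)Π(x⁺ + δ) = 0. -/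

import Mathlib

open scoped RealInnerProductSpace

/-- The column-average operator `x ↦ (1/m)·1 1ᵀ x` on `ℝ^{m×n}`
(viewed as a Euclidean space with the Frobenius inner product). -/
noncomputable def colAvg (m n : ℕ) (x : EuclideanSpace ℝ (Fin m × Fin n)) :
    EuclideanSpace ℝ (Fin m × Fin n) :=
  WithLp.toLp 2 (fun p : Fin m × Fin n => (m : ℝ)⁻¹ * ∑ k : Fin m, x (k, p.2))

/-- The operator `Π = I − (1/m)·1 1ᵀ` acting on `ℝ^{m×n}`. -/
noncomputable def cProj (m n : ℕ) (x : EuclideanSpace ℝ (Fin m × Fin n)) :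
    EuclideanSpace ℝ (Fin m × Fin n) :=
  x - colAvg m n x

lemma colAvg_add (m n : ℕ) (x y : EuclideanSpace ℝ (Fin m × Fin n)) :
    colAvg m n (x + y) = colAvg m n x + colAvg m n y := by
  ext p
  simp [colAvg, Finset.sum_add_distrib, mul_add]

lemma colAvg_smul (m n : ℕ) (r : ℝ) (x : EuclideanSpace ℝ (Fin m × Fin n)) :
    colAvg m n (r • x) = r • colAvg m n x := by
  ext p
  simp only [colAvg, PiLp.toLp_apply, PiLp.smul_apply, smul_eq_mul, Finset.mul_sum]
  congr 1; funext k; ring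

lemma colAvg_neg (m n : ℕ) (x : EuclideanSpace ℝ (Fin m × Fin n)) :
    colAvg m n (-x) = - colAvg m n x := by
  simpa using colAvg_smul m n (-1) x

lemma colAvg_colAvg (m n : ℕ) (hm : 0 < m) (x : EuclideanSpace ℝ (Fin m × Fin n)) :
    colAvg m n (colAvg m n x) = colAvg m n x := by
  ext p
  simp only [colAvg, PiLp.toLp_apply, Finset.sum_const, Finset.card_univ, Fintype.card_fin, nsmul_eq_mul]
  have : (m : ℝ) ≠ 0 := Nat.cast_ne_zero.mpr hm.ne'
  field_simp

lemma cProj_add (m n : ℕ) (x y : EuclideanSpace ℝ (Fin m × Fin n)) :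
    cProj m n (x + y) = cProj m n x + cProj m n y := by
  simp only [cProj, colAvg_add]; abel

lemma cProj_smul (m n : ℕ) (r : ℝ) (x : EuclideanSpace ℝ (Fin m × Fin n)) :
    cProj m n (r • x) = r • cProj m n x := by
  simp only [cProj, colAvg_smul, smul_sub]

lemma cProj_neg (m n : ℕ) (x : EuclideanSpace ℝ (Fin m × Fin n)) :
    cProj m n (-x) = - cProj m n x := by
  simpa using cProj_smul m n (-1) x

lemma cProj_sub (m n : ℕ) (x y : EuclideanSpace ℝ (Fin m × Fin n)) :
    cProj m n (x - y) = cProj m n x - cProj m n y := by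
  rw [sub_eq_add_neg, cProj_add, cProj_neg, sub_eq_add_neg]

lemma colAvg_cProj (m n : ℕ) (hm : 0 < m) (x : EuclideanSpace ℝ (Fin m × Fin n)) :
    colAvg m n (cProj m n x) = 0 := by
  have h : cProj m n x = x + -(colAvg m n x) := by
    simp [cProj, sub_eq_add_neg]
  rw [h, colAvg_add, colAvg_neg, colAvg_colAvg m n hm]
  simp

lemma cProj_colAvg (m n : ℕ) (hm : 0 < m) (x : EuclideanSpace ℝ (Fin m × Fin n)) :
    cProj m n (colAvg m n x) = 0 := by
  simp [cProj, colAvg_colAvg m n hm]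

lemma cProj_cProj (m n : ℕ) (hm : 0 < m) (x : EuclideanSpace ℝ (Fin m × Fin n)) :
    cProj m n (cProj m n x) = cProj m n x := by
  have : cProj m n (cProj m n x) = cProj m n x - colAvg m n (cProj m n x) := rfl
  rw [this, colAvg_cProj m n hm, sub_zero]

lemma inner_colAvg (m n : ℕ) (x y : EuclideanSpace ℝ (Fin m × Fin n)) :
    ⟪colAvg m n x, y⟫ = ⟪x, colAvg m n y⟫ := by
  simp only [PiLp.inner_apply, RCLike.inner_apply, conj_trivial, colAvg, PiLp.toLp_apply]
  rw [Fintype.sum_prod_type, Fintype.sum_prod_type]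
  rw [Finset.sum_comm]
  simp only [Finset.sum_mul, Finset.mul_sum]
  conv_rhs => rw [Finset.sum_comm]
  refine Finset.sum_congr rfl fun j _ => ?_
  rw [Finset.sum_comm]
  exact Finset.sum_congr rfl fun a _ => Finset.sum_congr rfl fun b _ => by ring

lemma inner_cProj (m n : ℕ) (x y : EuclideanSpace ℝ (Fin m × Fin n)) :
    ⟪cProj m n x, y⟫ = ⟪x, cProj m n y⟫ := by
  have h1 : (cProj m n x : EuclideanSpace ℝ (Fin m × Fin n)) = x - colAvg m n x := rfl
  have h2 : (cProj m n y : EuclideanSpace ℝ (Fin m × Fin n)) = y - colAvg m n y := rfl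
  rw [h1, h2, inner_sub_left, inner_sub_right, inner_colAvg]

set_option maxHeartbeats 1600000

theorem stmt4 (m n : ℕ) (hm : 0 < m) (L β₀ ϑ ε : ℝ)
    (hL : 0 < L) (hβ₀ : 0 < β₀) (hϑ : 0 < ϑ) (hε : 0 ≤ ε)
    (z xplus : EuclideanSpace ℝ (Fin m × Fin n))
    (hxp : ∀ x : EuclideanSpace ℝ (Fin m × Fin n),
      (L / 2) * ‖xplus - z‖ ^ 2 + (β₀ / (2 * ϑ)) * ‖cProj m n xplus‖ ^ 2 ≤
        (L / 2) * ‖x - z‖ ^ 2 + (β₀ / (2 * ϑ)) * ‖cProj m n x‖ ^ 2 + ε) :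
    ∃ δ : EuclideanSpace ℝ (Fin m × Fin n),
      ‖δ‖ ≤ Real.sqrt (2 * ε / L) ∧
      (β₀ / ϑ) * ‖cProj m n δ‖ ^ 2 ≤ 2 * ε ∧
      L • (xplus - z + δ) + (β₀ / ϑ) • cProj m n (xplus + δ) = 0 := by
  set c := β₀ / ϑ with hcdef
  have hc : 0 < c := div_pos hβ₀ hϑ
  have hLc : (0:ℝ) < L + c := by linarith
  set t := L / (L + c) with htdef
  set xstar : EuclideanSpace ℝ (Fin m × Fin n) :=
    colAvg m n z + t • cProj m n z with hxs
  have hPxs : cProj m n xstar = t • cProj m n z := by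
    rw [hxs, cProj_add, cProj_smul, cProj_colAvg m n hm, cProj_cProj m n hm, zero_add]
  have hca : colAvg m n z = z - cProj m n z := by simp [cProj]
  have hz1 : xstar - z = (t - 1) • cProj m n z := by
    rw [hxs, hca]; module
  have hstat : L • (xstar - z) + c • cProj m n xstar = 0 := by
    rw [hz1, hPxs, smul_smul, smul_smul, ← add_smul]
    have h0 : L * (t - 1) + c * t = 0 := by
      rw [htdef]; field_simp; ring
    rw [h0, zero_smul]
  set δ : EuclideanSpace ℝ (Fin m × Fin n) := xstar - xplus with hδ
  have hsplit1 : xplus - z = (xstar - z) - δ := by rw [hδ]; abel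
  have hsplit2 : cProj m n xplus = cProj m n xstar - cProj m n δ := by
    have hx : xplus = xstar - δ := by rw [hδ]; abel
    rw [hx, cProj_sub]
  have hn1 : ‖xplus - z‖^2 = ‖xstar - z‖^2 - 2 * ⟪xstar - z, δ⟫ + ‖δ‖^2 := by
    rw [hsplit1]; exact norm_sub_sq_real _ _
  have hn2 : ‖cProj m n xplus‖^2 =
      ‖cProj m n xstar‖^2 - 2 * ⟪cProj m n xstar, cProj m n δ⟫ + ‖cProj m n δ‖^2 := by
    rw [hsplit2]; exact norm_sub_sq_real _ _
  have hcross : L * ⟪xstar - z, δ⟫ + c * ⟪cProj m n xstar, cProj m n δ⟫ = 0 := by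
    have h1 : ⟪cProj m n xstar, cProj m n δ⟫ = ⟪cProj m n xstar, δ⟫ := by
      rw [← inner_cProj, cProj_cProj m n hm]
    rw [h1, ← real_inner_smul_left, ← real_inner_smul_left, ← inner_add_left, hstat,
      inner_zero_left]
  have hco : β₀ / (2 * ϑ) = c / 2 := by
    rw [hcdef, div_div, mul_comm]
  have key := hxp xstar
  rw [hco, hn1, hn2] at key
  clear_value c t xstar δ
  have hkey : (L/2) * ‖δ‖^2 + (c/2) * ‖cProj m n δ‖^2 ≤ ε := by nlinarith [hcross, key]
  have hPd : (0:ℝ) ≤ (c/2) * ‖cProj m n δ‖^2 := by positivity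
  have hDd : (0:ℝ) ≤ (L/2) * ‖δ‖^2 := by positivity
  refine ⟨δ, ?_, ?_, ?_⟩
  · have hd2 : ‖δ‖^2 ≤ 2 * ε / L := by
      rw [le_div_iff₀ hL]
      nlinarith [hkey, hPd]
    have h := Real.sqrt_le_sqrt hd2
    rwa [Real.sqrt_sq (norm_nonneg _)] at h
  · nlinarith [hkey, hDd]
  · have e1 : xplus - z + δ = xstar - z := by rw [hδ]; abel
    have e2 : xplus + δ = xstar := by rw [hδ]; abel
    rw [e1, e2]; exact hstat
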